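/- Fix n_0 ≥ 1. (i) For every p ∈ [1, ∞), every f ∈ L^p(ℝ^{n_0}) and every ε > 0 there is a function g computed by a ReLU network with input dimension n_0, output dimension 1 and all hidden layers of width 2n_0 + 6 such that ‖f − g‖_{L^p(ℝ^{n_0})} < ε. (ii) For every compact set K ⊂ ℝ^{n_0}, every continuous f : K → ℝ and every ε > 0 there is a function g computed by such a network with sup_{x ∈ K} |f(x) − g(x)| < ε. -/

import Mathlib

open scoped BigOperators
open MeasureTheory

noncomputable section

/-- The ReLU activation function. -/
def relu (x : ℝ) : ℝ := max x 0

/-- `f : ℝ^n → ℝ^m` is an affine map. -/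
def IsAffineMap {n m : ℕ} (f : (Fin n → ℝ) → Fin m → ℝ) : Prop :=
  ∃ (A : Matrix (Fin m) (Fin n) ℝ) (b : Fin m → ℝ),
    ∀ x i, f x i = (∑ j, A i j * x j) + b i

/-- `f : ℝ^n → ℝ^m` is an affine map all of whose coefficients have absolute value ≤ c. -/
def IsAffineMapB (c : ℝ) {n m : ℕ} (f : (Fin n → ℝ) → Fin m → ℝ) : Prop :=
  ∃ (A : Matrix (Fin m) (Fin n) ℝ) (b : Fin m → ℝ),
    (∀ i j, |A i j| ≤ c) ∧ (∀ i, |b i| ≤ c) ∧ ∀ x i, f x i = (∑ j, A i j * x j) + b i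

/-- `ComputesA ρ n hidden m f` : `f` is computed by a feedforward network with activation
function `ρ`, input dimension `n`, hidden layer widths `hidden` and output dimension `m`. -/
inductive ComputesA (ρ : ℝ → ℝ) :
    ∀ (n : ℕ), List ℕ → ∀ (m : ℕ), ((Fin n → ℝ) → Fin m → ℝ) → Prop
  | nil {n m : ℕ} (f : (Fin n → ℝ) → Fin m → ℝ) (hf : IsAffineMap f) :
      ComputesA ρ n [] m f
  | cons {n w m : ℕ} {ws : List ℕ} (f₀ : (Fin n → ℝ) → Fin w → ℝ)
      (g : (Fin w → ℝ) → Fin m → ℝ) (hf : IsAffineMap f₀)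
      (hg : ComputesA ρ w ws m g) :
      ComputesA ρ n (w :: ws) m (fun x => g (fun i => ρ (f₀ x i)))

/-- Same as `ComputesA` but all coefficients of all affine maps are bounded by `c`. -/
inductive ComputesAB (ρ : ℝ → ℝ) (c : ℝ) :
    ∀ (n : ℕ), List ℕ → ∀ (m : ℕ), ((Fin n → ℝ) → Fin m → ℝ) → Prop
  | nil {n m : ℕ} (f : (Fin n → ℝ) → Fin m → ℝ) (hf : IsAffineMapB c f) :
      ComputesAB ρ c n [] m f
  | cons {n w m : ℕ} {ws : List ℕ} (f₀ : (Fin n → ℝ) → Fin w → ℝ)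
      (g : (Fin w → ℝ) → Fin m → ℝ) (hf : IsAffineMapB c f₀)
      (hg : ComputesAB ρ c w ws m g) :
      ComputesAB ρ c n (w :: ws) m (fun x => g (fun i => ρ (f₀ x i)))

/-- `f` is computed by a ReLU network of design `(n, hidden…, m)`. -/
def Computes (n : ℕ) (hidden : List ℕ) (m : ℕ) (f : (Fin n → ℝ) → Fin m → ℝ) : Prop :=
  ComputesA relu n hidden m f

/-- `R` is a linear region of `f` : an open connected set on which `f` is affine,
maximal in the sense that `f` is not affine on any strictly larger open set. -/
def IsLinearRegion {n m : ℕ} (f : (Fin n → ℝ) → Fin m → ℝ) (R : Set (Fin n → ℝ)) : Prop :=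
  IsOpen R ∧ IsConnected R ∧ (∃ g, IsAffineMap g ∧ Set.EqOn f g R) ∧
    ∀ R' : Set (Fin n → ℝ), IsOpen R' → R ⊂ R' →
      ¬ ∃ g, IsAffineMap g ∧ Set.EqOn f g R'

/-- The number of linear regions of `f`. -/
def numRegions {n m : ℕ} (f : (Fin n → ℝ) → Fin m → ℝ) : ℕ :=
  {R | IsLinearRegion f R}.ncard

/-- `R(n, hidden…, m)` : the maximal number of linear regions of a function computed by a
ReLU network of design `(n, hidden…, m)`. -/
def maxRegions (n : ℕ) (hidden : List ℕ) (m : ℕ) : ℕ :=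
  sSup {k | ∃ f : (Fin n → ℝ) → Fin m → ℝ, Computes n hidden m f ∧ numRegions f = k}

/-- `f` is piecewise affine: continuous, finitely many linear regions, whose closures cover. -/
def IsPiecewiseAffine {n m : ℕ} (f : (Fin n → ℝ) → Fin m → ℝ) : Prop :=
  Continuous f ∧ {R | IsLinearRegion f R}.Finite ∧
    (⋃ R ∈ {R | IsLinearRegion f R}, closure R) = Set.univ

-- ============ infra ============
namespace NN

lemma relu_nonneg (x : ℝ) : 0 ≤ relu x := le_max_right _ _
lemma relu_of_nonneg {x : ℝ} (h : 0 ≤ x) : relu x = x := max_eq_left h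
lemma relu_of_nonpos {x : ℝ} (h : x ≤ 0) : relu x = 0 := max_eq_right h
lemma relu_zero : relu 0 = 0 := max_self 0
lemma relu_sub_relu_neg (a : ℝ) : relu a - relu (-a) = a := by
  rcases le_total a 0 with h | h
  · rw [relu_of_nonpos h, relu_of_nonneg (by linarith)]; ring
  · rw [relu_of_nonneg h, relu_of_nonpos (by linarith)]; ring
lemma relu_mono {a b : ℝ} (h : a ≤ b) : relu a ≤ relu b := max_le_max h le_rfl
lemma relu_continuous : Continuous relu := continuous_max.comp (continuous_id.prodMk continuous_const)

/-- dot product -/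
def dot {k : ℕ} (c v : Fin k → ℝ) : ℝ := ∑ j, c j * v j

lemma dot_append {m k : ℕ} (c : Fin m → ℝ) (d : Fin k → ℝ) (u : Fin m → ℝ) (w : Fin k → ℝ) :
    dot (Fin.append c d) (Fin.append u w) = dot c u + dot d w := by
  unfold dot
  rw [Fin.sum_univ_add]
  simp [Fin.append_left, Fin.append_right]

lemma dot_single {k : ℕ} (i : Fin k) (a : ℝ) (v : Fin k → ℝ) :
    dot (Pi.single i a) v = a * v i := by
  unfold dot
  rw [Finset.sum_eq_single i]
  · simp
  · intro b _ hb; simp [Pi.single_apply, hb]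
  · simp

lemma dot_zero {k : ℕ} (v : Fin k → ℝ) : dot (0 : Fin k → ℝ) v = 0 := by simp [dot]

lemma dot_add_left {k : ℕ} (c d v : Fin k → ℝ) : dot (c + d) v = dot c v + dot d v := by
  simp [dot, add_mul, Finset.sum_add_distrib]

lemma dot_neg_left {k : ℕ} (c v : Fin k → ℝ) : dot (-c) v = - dot c v := by
  simp [dot]

lemma dot_pm {k : ℕ} (a x : Fin k → ℝ) :
    dot a (fun i => relu (x i)) + dot (-a) (fun i => relu (-x i)) = dot a x := by
  unfold dot
  rw [← Finset.sum_add_distrib]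
  apply Finset.sum_congr rfl
  intro i _
  have := relu_sub_relu_neg (x i)
  simp only [Pi.neg_apply]
  have h := relu_sub_relu_neg (x i)
  linear_combination (a i) * h


variable {n : ℕ}

/-- a program step: register `k` gets `relu (a ⬝ x + c ⬝ r + b)`. -/
structure Step (n : ℕ) where
  a : Fin n → ℝ
  c : Fin 6 → ℝ
  b : ℝ
  k : Fin 6

def exec (st : Step n) (x : Fin n → ℝ) (r : Fin 6 → ℝ) : Fin 6 → ℝ :=
  fun j => if j = st.k then relu (dot st.a x + dot st.c r + st.b) else r j

def run (steps : List (Step n)) (x : Fin n → ℝ) : Fin 6 → ℝ :=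
  steps.foldl (fun r st => exec st x r) 0

lemma exec_nonneg {st : Step n} {x r} (hr : ∀ j, 0 ≤ r j) : ∀ j, 0 ≤ exec st x r j := by
  intro j; unfold exec; split
  · exact relu_nonneg _
  · exact hr j

lemma foldl_nonneg (steps : List (Step n)) (x : Fin n → ℝ) :
    ∀ r : Fin 6 → ℝ, (∀ j, 0 ≤ r j) →
      ∀ j, 0 ≤ (steps.foldl (fun r st => exec st x r) r) j := by
  induction steps with
  | nil => intro r hr j; exact hr j
  | cons st rest ih => intro r hr j; exact ih _ (exec_nonneg hr) j

lemma run_nonneg (steps : List (Step n)) (x : Fin n → ℝ) : ∀ j, 0 ≤ run steps x j :=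
  foldl_nonneg steps x 0 (fun _ => le_rfl)

lemma exec_continuous (st : Step n) (ρ : (Fin n → ℝ) → Fin 6 → ℝ) (hρ : Continuous ρ) :
    Continuous (fun x => exec st x (ρ x)) := by
  unfold exec
  apply continuous_pi
  intro j
  by_cases h : j = st.k
  · simp only [if_pos h]
    apply relu_continuous.comp
    apply Continuous.add
    · apply Continuous.add
      · unfold dot; exact continuous_finset_sum _ (fun i _ => (continuous_const.mul (continuous_apply i)))
      · unfold dot; apply continuous_finset_sum
        intro i _
        exact continuous_const.mul ((continuous_apply i).comp hρ)
    · exact continuous_const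
  · simp only [if_neg h]
    exact (continuous_apply j).comp hρ

lemma foldl_continuous (steps : List (Step n)) :
    ∀ ρ : (Fin n → ℝ) → Fin 6 → ℝ, Continuous ρ →
      Continuous (fun x => steps.foldl (fun r st => exec st x r) (ρ x)) := by
  induction steps with
  | nil => intro ρ hρ; simpa using hρ
  | cons st rest ih =>
      intro ρ hρ
      simpa using ih (fun x => exec st x (ρ x)) (exec_continuous st ρ hρ)

lemma run_continuous (steps : List (Step n)) : Continuous (fun x => run steps x) :=
  foldl_continuous steps (fun _ => 0) continuous_const

end NN

-- ============ simulation ============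
namespace NN
variable {n : ℕ}

/-- encoded state: (relu x, relu (-x), registers) -/
def enc (x : Fin n → ℝ) (r : Fin 6 → ℝ) : Fin (n + (n + 6)) → ℝ :=
  Fin.append (fun i => relu (x i)) (Fin.append (fun i => relu (-x i)) r)

def rowXp (i : Fin n) : Fin (n + (n + 6)) → ℝ :=
  Fin.append (Pi.single i 1) (Fin.append (Pi.single i (-1)) 0)
def rowXm (i : Fin n) : Fin (n + (n + 6)) → ℝ :=
  Fin.append (Pi.single i (-1)) (Fin.append (Pi.single i 1) 0)
def rowPass (j : Fin 6) : Fin (n + (n + 6)) → ℝ :=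
  Fin.append (0 : Fin n → ℝ) (Fin.append (0 : Fin n → ℝ) (Pi.single j 1))
def rowNew (st : Step n) : Fin (n + (n + 6)) → ℝ :=
  Fin.append st.a (Fin.append (-st.a) st.c)

def rowM (st : Step n) : Fin (n + (n + 6)) → Fin (n + (n + 6)) → ℝ :=
  Fin.append rowXp (Fin.append rowXm (fun j => if j = st.k then rowNew st else rowPass j))

def biasM (st : Step n) : Fin (n + (n + 6)) → ℝ :=
  Fin.append (0 : Fin n → ℝ) (Fin.append (0 : Fin n → ℝ) (fun j => if j = st.k then st.b else 0))

def layerM (st : Step n) : (Fin (n + (n + 6)) → ℝ) → Fin (n + (n + 6)) → ℝ :=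
  fun v i => dot (rowM st i) v + biasM st i

lemma layerM_affine (st : Step n) : IsAffineMap (layerM st) :=
  ⟨fun i j => rowM st i j, biasM st, fun _ _ => rfl⟩

lemma dot_rowXp (i : Fin n) (x : Fin n → ℝ) (r : Fin 6 → ℝ) :
    dot (rowXp i) (enc x r) = x i := by
  unfold rowXp enc
  rw [dot_append, dot_append, dot_single, dot_single, dot_zero]
  have := relu_sub_relu_neg (x i)
  linarith

lemma dot_rowXm (i : Fin n) (x : Fin n → ℝ) (r : Fin 6 → ℝ) :
    dot (rowXm i) (enc x r) = -x i := by
  unfold rowXm enc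
  rw [dot_append, dot_append, dot_single, dot_single, dot_zero]
  have := relu_sub_relu_neg (x i)
  linarith

lemma dot_rowPass (j : Fin 6) (x : Fin n → ℝ) (r : Fin 6 → ℝ) :
    dot (rowPass j) (enc x r) = r j := by
  unfold rowPass enc
  rw [dot_append, dot_append, dot_zero, dot_zero, dot_single]
  ring

lemma dot_rowNew (st : Step n) (x : Fin n → ℝ) (r : Fin 6 → ℝ) :
    dot (rowNew st) (enc x r) = dot st.a x + dot st.c r := by
  unfold rowNew enc
  rw [dot_append, dot_append]
  have := dot_pm st.a x
  linarith

lemma enc_left (x : Fin n → ℝ) (r : Fin 6 → ℝ) (i0 : Fin n) :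
    enc x r (Fin.castAdd (n + 6) i0) = relu (x i0) := Fin.append_left _ _ _

lemma enc_mid (x : Fin n → ℝ) (r : Fin 6 → ℝ) (i0 : Fin n) :
    enc x r (Fin.natAdd n (Fin.castAdd 6 i0)) = relu (-x i0) := by
  unfold enc
  rw [Fin.append_right, Fin.append_left]

lemma enc_reg (x : Fin n → ℝ) (r : Fin 6 → ℝ) (j : Fin 6) :
    enc x r (Fin.natAdd n (Fin.natAdd n j)) = r j := by
  unfold enc
  rw [Fin.append_right, Fin.append_right]

lemma layer_step (st : Step n) (x : Fin n → ℝ) (r : Fin 6 → ℝ) (hr : ∀ j, 0 ≤ r j) :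
    (fun i => relu (layerM st (enc x r) i)) = enc x (exec st x r) := by
  funext i
  refine Fin.addCases (motive := fun i => relu (layerM st (enc x r) i) = enc x (exec st x r) i) ?_ ?_ i
  · intro i0
    rw [enc_left]
    unfold layerM rowM biasM
    rw [Fin.append_left, Fin.append_left, dot_rowXp]
    norm_num
  · intro i1
    refine Fin.addCases (motive := fun i1 => relu (layerM st (enc x r) (Fin.natAdd n i1)) =
        enc x (exec st x r) (Fin.natAdd n i1)) ?_ ?_ i1
    · intro i0
      rw [enc_mid]
      unfold layerM rowM biasM
      rw [Fin.append_right, Fin.append_right, Fin.append_left, Fin.append_left, dot_rowXm]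
      norm_num
    · intro j
      rw [enc_reg]
      unfold layerM rowM biasM
      rw [Fin.append_right, Fin.append_right, Fin.append_right, Fin.append_right]
      by_cases h : j = st.k
      · rw [if_pos h, if_pos h, dot_rowNew]
        simp only [exec, if_pos h]
      · rw [if_neg h, if_neg h, dot_rowPass, add_zero]
        simp only [exec, if_neg h]
        exact relu_of_nonneg (hr j)

def rowOut (aout : Fin n → ℝ) (cout : Fin 6 → ℝ) : Fin (n + (n + 6)) → ℝ :=
  Fin.append aout (Fin.append (-aout) cout)

lemma dot_rowOut (aout : Fin n → ℝ) (cout : Fin 6 → ℝ) (x : Fin n → ℝ) (r : Fin 6 → ℝ) :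
    dot (rowOut aout cout) (enc x r) = dot aout x + dot cout r := by
  unfold rowOut enc
  rw [dot_append, dot_append]
  have := dot_pm aout x
  linarith

lemma simAux (steps : List (Step n)) (aout : Fin n → ℝ) (cout : Fin 6 → ℝ) (bout : ℝ) :
    ∃ G : (Fin (n + (n + 6)) → ℝ) → Fin 1 → ℝ,
      ComputesA relu (n + (n + 6)) (List.replicate steps.length (n + (n + 6))) 1 G ∧
      ∀ x r, (∀ j, 0 ≤ r j) →
        G (enc x r) 0 = dot aout x + dot cout (steps.foldl (fun r st => exec st x r) r) + bout := by
  induction steps with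
  | nil =>
      refine ⟨fun v _ => dot (rowOut aout cout) v + bout, ?_, ?_⟩
      · exact ComputesA.nil _ ⟨fun _ j => rowOut aout cout j, fun _ => bout, fun _ _ => rfl⟩
      · intro x r _
        simp [dot_rowOut]
  | cons st rest ih =>
      obtain ⟨G, hG, hsem⟩ := ih
      refine ⟨fun v => G (fun i => relu (layerM st v i)), ?_, ?_⟩
      · rw [List.length_cons, List.replicate_succ]
        exact ComputesA.cons _ _ (layerM_affine st) hG
      · intro x r hr
        simp only [List.foldl_cons]
        rw [layer_step st x r hr]
        exact hsem x (exec st x r) (exec_nonneg hr)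

def rowF (i : Fin (n + (n + 6))) : Fin n → ℝ :=
  Fin.append (fun i => (Pi.single i 1 : Fin n → ℝ))
    (Fin.append (fun i => (Pi.single i (-1) : Fin n → ℝ)) (fun _ => (0 : Fin n → ℝ))) i

lemma first_layer (x : Fin n → ℝ) :
    (fun i => relu (dot (rowF i) x + 0)) = enc x 0 := by
  funext i
  refine Fin.addCases (motive := fun i => relu (dot (rowF i) x + 0) = enc x 0 i) ?_ ?_ i
  · intro i0
    rw [enc_left]
    unfold rowF
    rw [Fin.append_left, dot_single]
    norm_num
  · intro i1
    refine Fin.addCases (motive := fun i1 => relu (dot (rowF (Fin.natAdd n i1)) x + 0) =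
        enc x 0 (Fin.natAdd n i1)) ?_ ?_ i1
    · intro i0
      rw [enc_mid]
      unfold rowF
      rw [Fin.append_right, Fin.append_left, dot_single]
      norm_num
    · intro j
      rw [enc_reg]
      unfold rowF
      rw [Fin.append_right, Fin.append_right, dot_zero]
      norm_num [relu_zero]

/-- main simulation theorem -/
theorem sim (steps : List (Step n)) (aout : Fin n → ℝ) (cout : Fin 6 → ℝ) (bout : ℝ) :
    ∃ (Lc : ℕ) (g : (Fin n → ℝ) → Fin 1 → ℝ),
      Computes n (List.replicate Lc (2 * n + 6)) 1 g ∧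
      ∀ x, g x 0 = dot aout x + dot cout (run steps x) + bout := by
  obtain ⟨G, hG, hsem⟩ := simAux steps aout cout bout
  refine ⟨steps.length + 1, fun x => G (fun i => relu (dot (rowF i) x + 0)), ?_, ?_⟩
  · have e : 2 * n + 6 = n + (n + 6) := by ring
    rw [e, List.replicate_succ]
    exact ComputesA.cons (fun x i => dot (rowF i) x + 0) G
      ⟨fun i j => rowF i j, fun _ => 0, fun _ _ => rfl⟩ hG
  · intro x
    show G (fun i => relu (dot (rowF i) x + 0)) 0 = _
    rw [first_layer x]
    exact hsem x 0 (fun _ => le_rfl)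

end NN

-- ============ accumulation programs ============
namespace NN
variable {n : ℕ}

/-- shallow sum semantics: `∑ c_i relu(a_i ⬝ x + b_i)` over a list of terms `(a, b, c)` -/
def SH (T : List ((Fin n → ℝ) × ℝ × ℝ)) (x : Fin n → ℝ) : ℝ :=
  (T.map fun t => t.2.2 * relu (dot t.1 x + t.2.1)).sum

/-- program accumulating `SH T` as difference of registers `j0 - j1`, using scratch `jz`. -/
def accProg (j0 j1 jz : Fin 6) (T : List ((Fin n → ℝ) × ℝ × ℝ)) : List (Step n) :=
  T.flatMap fun t =>
    [⟨t.1, 0, t.2.1, jz⟩,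
     ⟨0, Pi.single (if 0 ≤ t.2.2 then j0 else j1) 1 + Pi.single jz |t.2.2|, 0,
       if 0 ≤ t.2.2 then j0 else j1⟩]

lemma acc_sem (j0 j1 jz : Fin 6) (h01 : j0 ≠ j1) (h0z : j0 ≠ jz) (h1z : j1 ≠ jz)
    (T : List ((Fin n → ℝ) × ℝ × ℝ)) (x : Fin n → ℝ) :
    ∀ r : Fin 6 → ℝ, (∀ j, 0 ≤ r j) →
      ((accProg j0 j1 jz T).foldl (fun r st => exec st x r) r) j0
        - ((accProg j0 j1 jz T).foldl (fun r st => exec st x r) r) j1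
        = r j0 - r j1 + SH T x
      ∧ ∀ j, j ≠ j0 → j ≠ j1 → j ≠ jz →
          ((accProg j0 j1 jz T).foldl (fun r st => exec st x r) r) j = r j := by
  induction T with
  | nil => intro r hr; simp [accProg, SH]
  | cons t T ih =>
      intro r hr
      have hacc : accProg j0 j1 jz (t :: T)
          = (⟨t.1, 0, t.2.1, jz⟩ : Step n) ::
            (⟨0, Pi.single (if 0 ≤ t.2.2 then j0 else j1) 1 + Pi.single jz |t.2.2|, 0,
              if 0 ≤ t.2.2 then j0 else j1⟩ : Step n) :: accProg j0 j1 jz T := by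
        simp [accProg]
      set z := relu (dot t.1 x + t.2.1) with hz
      have hznn : 0 ≤ z := relu_nonneg _
      set jt : Fin 6 := if 0 ≤ t.2.2 then j0 else j1 with hjt
      set r1 : Fin 6 → ℝ := Function.update r jz z with hr1def
      have hr1 : exec (⟨t.1, 0, t.2.1, jz⟩ : Step n) x r = r1 := by
        funext j
        simp only [exec]
        by_cases h : j = jz
        · simp [hr1def, h, dot_zero, hz]
        · simp [hr1def, h, Function.update_of_ne h]
      have hr1nn : ∀ j, 0 ≤ r1 j := by
        intro j
        by_cases h : j = jz
        · subst h; simp [hr1def, hznn]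
        · simp [hr1def, Function.update_of_ne h, hr j]
      have hr1z : r1 jz = z := by simp [hr1def]
      set r2 : Fin 6 → ℝ := Function.update r1 jt (r1 jt + |t.2.2| * z) with hr2def
      have hr2 : exec (⟨0, Pi.single jt 1 + Pi.single jz |t.2.2|, 0, jt⟩ : Step n) x r1 = r2 := by
        funext j
        simp only [exec]
        by_cases h : j = jt
        · rw [if_pos h, hr2def, h, Function.update_self]
          rw [dot_zero, dot_add_left, dot_single, dot_single, hr1z]
          rw [zero_add, add_zero, one_mul]
          apply relu_of_nonneg
          have := hr1nn jt
          positivity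
        · rw [if_neg h, hr2def, Function.update_of_ne h]
      have hr2nn : ∀ j, 0 ≤ r2 j := by
        intro j
        by_cases h : j = jt
        · subst h; rw [hr2def, Function.update_self]
          have := hr1nn jt; positivity
        · rw [hr2def, Function.update_of_ne h]; exact hr1nn j
      have hfold : (accProg j0 j1 jz (t :: T)).foldl (fun r st => exec st x r) r
          = (accProg j0 j1 jz T).foldl (fun r st => exec st x r) r2 := by
        rw [hacc]
        simp only [List.foldl_cons]
        rw [hr1, hr2]
      obtain ⟨ihd, ihp⟩ := ih r2 hr2nn
      have e2 : r1 j0 = r j0 := Function.update_of_ne h0z _ _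
      have e3 : r1 j1 = r j1 := Function.update_of_ne h1z _ _
      have hr2j0j1 : r2 j0 - r2 j1 = r j0 - r j1 + t.2.2 * z := by
        by_cases hc : 0 ≤ t.2.2
        · have hjt0 : jt = j0 := by rw [hjt, if_pos hc]
          have e0 : r2 j0 = r1 j0 + |t.2.2| * z := by
            rw [hr2def, ← hjt0, Function.update_self]
          have e1 : r2 j1 = r1 j1 := by
            rw [hr2def, Function.update_of_ne (hjt0 ▸ h01.symm)]
          rw [e0, e1, e2, e3, abs_of_nonneg hc]; ring
        · push_neg at hc
          have hjt1 : jt = j1 := by rw [hjt, if_neg (not_le.mpr hc)]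
          have e0 : r2 j1 = r1 j1 + |t.2.2| * z := by
            rw [hr2def, ← hjt1, Function.update_self]
          have e1 : r2 j0 = r1 j0 := by
            rw [hr2def, Function.update_of_ne (hjt1 ▸ h01)]
          rw [e0, e1, e2, e3, abs_of_neg hc]; ring
      constructor
      · rw [hfold, ihd, hr2j0j1]
        have : SH (t :: T) x = t.2.2 * z + SH T x := by simp [SH, hz]
        rw [this]; ring
      · intro j hj0 hj1 hjz
        rw [hfold, ihp j hj0 hj1 hjz]
        have hjjt : j ≠ jt := by
          by_cases hc : 0 ≤ t.2.2
          · rw [hjt, if_pos hc]; exact hj0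
          · rw [hjt, if_neg hc]; exact hj1
        rw [hr2def, Function.update_of_ne hjjt, hr1def, Function.update_of_ne hjz]

end NN

-- ============ wrappers ============
namespace NN
variable {n : ℕ}

lemma dot_cont (c : Fin n → ℝ) : Continuous (fun x => dot c x) := by
  unfold dot
  exact continuous_finset_sum _ (fun i _ => continuous_const.mul (continuous_apply i))

lemma SH_cont (T : List ((Fin n → ℝ) × ℝ × ℝ)) : Continuous (fun x => SH T x) := by
  induction T with
  | nil =>
      have : (fun x : Fin n → ℝ => SH ([] : List ((Fin n → ℝ) × ℝ × ℝ)) x) = fun _ => 0 := by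
        funext x; simp [SH]
      rw [this]; exact continuous_const
  | cons t T ih =>
      have : (fun x => SH (t :: T) x)
          = fun x => t.2.2 * relu (dot t.1 x + t.2.1) + SH T x := by
        funext x; simp [SH]
      rw [this]
      exact (continuous_const.mul
        (relu_continuous.comp ((dot_cont t.1).add continuous_const))).add ih

lemma exec_eval (a : Fin n → ℝ) (c : Fin 6 → ℝ) (b : ℝ) (k : Fin 6) (x : Fin n → ℝ)
    (r : Fin 6 → ℝ) :
    exec ⟨a, c, b, k⟩ x r = Function.update r k (relu (dot a x + dot c r + b)) := by
  funext j
  by_cases h : j = k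
  · subst h; simp [exec]
  · simp [exec, h, Function.update_of_ne h]

/-- every shallow sum `c₀ + SH T` is exactly computed by a deep narrow network -/
theorem shallow_exact (T : List ((Fin n → ℝ) × ℝ × ℝ)) (c₀ : ℝ) :
    ∃ (Lc : ℕ) (g : (Fin n → ℝ) → Fin 1 → ℝ),
      Computes n (List.replicate Lc (2 * n + 6)) 1 g ∧
      (∀ x, g x 0 = c₀ + SH T x) ∧
      Continuous (fun x => g x 0) := by
  obtain ⟨Lc, g, hc, hsem⟩ :=
    sim (accProg 0 1 2 T) 0 (Pi.single 0 1 + Pi.single 1 (-1)) c₀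
  have hval : ∀ x, g x 0 = c₀ + SH T x := by
    intro x
    rw [hsem x]
    obtain ⟨hd, _⟩ := acc_sem 0 1 2 (by decide) (by decide) (by decide) T x 0 (fun _ => le_rfl)
    rw [dot_zero, dot_add_left, dot_single, dot_single]
    unfold run
    have h0 : (0 : Fin 6 → ℝ) 0 = 0 := rfl
    have h1 : (0 : Fin 6 → ℝ) 1 = 0 := rfl
    rw [h0, h1] at hd
    set rr := (accProg (0:Fin 6) 1 2 T).foldl (fun r st => exec st x r) 0
    have : rr 0 - rr 1 = SH T x := by rw [hd]; ring
    linarith [this]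
  refine ⟨Lc, g, hc, hval, ?_⟩
  have : (fun x => g x 0) = fun x => c₀ + SH T x := funext hval
  rw [this]
  exact continuous_const.add (SH_cont T)

/-- the clamped function of part (i) is exactly computed by a deep narrow network -/
theorem clamp_exact (T T' : List ((Fin n → ℝ) × ℝ × ℝ)) (c₀ A : ℝ) :
    ∃ (Lc : ℕ) (g : (Fin n → ℝ) → Fin 1 → ℝ),
      Computes n (List.replicate Lc (2 * n + 6)) 1 g ∧
      (∀ x, g x 0 =
        relu (2 * relu (A - A * SH T' x) - relu (relu (A - A * SH T' x) - (c₀ + SH T x)))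
          - relu (A - A * SH T' x)) ∧
      Continuous (fun x => g x 0) := by
  obtain ⟨Lc, g, hc, hsem⟩ :=
    sim (accProg 0 1 4 T ++ accProg 2 3 4 T' ++
      [⟨0, Pi.single 2 (-A) + Pi.single 3 A, A, 5⟩,
       ⟨0, Pi.single 5 1 + Pi.single 0 (-1) + Pi.single 1 1, -c₀, 4⟩,
       ⟨0, Pi.single 5 2 + Pi.single 4 (-1), 0, 2⟩])
      0 (Pi.single 2 1 + Pi.single 5 (-1)) 0
  have hval : ∀ x, g x 0 =
      relu (2 * relu (A - A * SH T' x) - relu (relu (A - A * SH T' x) - (c₀ + SH T x)))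
        - relu (A - A * SH T' x) := by
    intro x
    rw [hsem x, dot_zero]
    set Φ := relu (A - A * SH T' x) with hΦ
    set u := c₀ + SH T x with hu
    -- stage A
    obtain ⟨hAd, hAp⟩ := acc_sem 0 1 4 (by decide) (by decide) (by decide) T x 0 (fun _ => le_rfl)
    set rA := (accProg (0:Fin 6) 1 4 T).foldl (fun r st => exec st x r) 0 with hrA
    have hAnn : ∀ j, 0 ≤ rA j := foldl_nonneg _ x 0 (fun _ => le_rfl)
    have hA01 : rA 0 - rA 1 = SH T x := by
      rw [hAd]; norm_num
    have hA2 : rA 2 = 0 := by rw [hAp 2 (by decide) (by decide) (by decide)]; rfl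
    have hA3 : rA 3 = 0 := by rw [hAp 3 (by decide) (by decide) (by decide)]; rfl
    -- stage B
    obtain ⟨hBd, hBp⟩ := acc_sem 2 3 4 (by decide) (by decide) (by decide) T' x rA hAnn
    set rB := (accProg (2:Fin 6) 3 4 T').foldl (fun r st => exec st x r) rA with hrB
    have hBnn : ∀ j, 0 ≤ rB j := foldl_nonneg _ x rA hAnn
    have hB23 : rB 2 - rB 3 = SH T' x := by
      rw [hBd, hA2, hA3]; ring
    have hB0 : rB 0 = rA 0 := hBp 0 (by decide) (by decide) (by decide)
    have hB1 : rB 1 = rA 1 := hBp 1 (by decide) (by decide) (by decide)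
    -- run the whole program
    have hrun : run (accProg 0 1 4 T ++ accProg 2 3 4 T' ++
          [⟨0, Pi.single 2 (-A) + Pi.single 3 A, A, 5⟩,
           ⟨0, Pi.single 5 1 + Pi.single 0 (-1) + Pi.single 1 1, -c₀, 4⟩,
           ⟨0, Pi.single 5 2 + Pi.single 4 (-1), 0, 2⟩]) x
        = exec ⟨0, Pi.single 5 2 + Pi.single 4 (-1), 0, 2⟩ x
            (exec ⟨0, Pi.single 5 1 + Pi.single 0 (-1) + Pi.single 1 1, -c₀, 4⟩ x
              (exec ⟨0, Pi.single 2 (-A) + Pi.single 3 A, A, 5⟩ x rB)) := by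
      rw [run, List.foldl_append, List.foldl_append]
      simp only [List.foldl_cons, List.foldl_nil]
      rfl
    rw [hrun]
    -- stage C
    rw [exec_eval, exec_eval, exec_eval]
    set rC := Function.update rB 5 (relu (dot (0 : Fin n → ℝ) x
      + dot (Pi.single 2 (-A) + Pi.single 3 A) rB + A)) with hrC
    have hC5 : rC 5 = Φ := by
      rw [hrC, Function.update_self, dot_zero, dot_add_left, dot_single, dot_single, hΦ]
      congr 1
      linear_combination (-A) * hB23
    have hC0 : rC 0 = rB 0 := Function.update_of_ne (by decide) _ _
    have hC1 : rC 1 = rB 1 := Function.update_of_ne (by decide) _ _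
    -- stage D
    set rD := Function.update rC 4 (relu (dot (0 : Fin n → ℝ) x
      + dot (Pi.single 5 1 + Pi.single 0 (-1) + Pi.single 1 1) rC + -c₀)) with hrD
    have hD4 : rD 4 = relu (Φ - u) := by
      rw [hrD, Function.update_self, dot_zero, dot_add_left, dot_add_left,
        dot_single, dot_single, dot_single, hC5, hC0, hC1, hB0, hB1]
      congr 1
      rw [hu]
      linarith [hA01]
    have hD5 : rD 5 = Φ := by
      rw [hrD, Function.update_of_ne (by decide), hC5]
    -- stage E
    set rE := Function.update rD 2 (relu (dot (0 : Fin n → ℝ) x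
      + dot (Pi.single 5 2 + Pi.single 4 (-1)) rD + 0)) with hrE
    have hE2 : rE 2 = relu (2 * Φ - relu (Φ - u)) := by
      rw [hrE, Function.update_self, dot_zero, dot_add_left, dot_single, dot_single, hD4, hD5]
      congr 1
      ring
    have hE5 : rE 5 = Φ := by
      rw [hrE, Function.update_of_ne (by decide), hD5]
    rw [dot_add_left, dot_single, dot_single, hE2, hE5]
    ring
  refine ⟨Lc, g, hc, hval, ?_⟩
  have : (fun x => g x 0) = fun x =>
      relu (2 * relu (A - A * SH T' x) - relu (relu (A - A * SH T' x) - (c₀ + SH T x)))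
        - relu (A - A * SH T' x) := funext hval
  rw [this]
  have hΦc : Continuous fun x => relu (A - A * SH T' x) :=
    relu_continuous.comp (continuous_const.sub (continuous_const.mul (SH_cont T')))
  have huc : Continuous fun x => c₀ + SH T x := continuous_const.add (SH_cont T)
  exact (relu_continuous.comp
    ((continuous_const.mul hΦc).sub (relu_continuous.comp (hΦc.sub huc)))).sub hΦc

end NN

-- ============ univariate piecewise-linear approximation ============
namespace NN

/-- 1D piecewise-linear sum -/
def PL (T1 : List (ℝ × ℝ)) (t : ℝ) : ℝ := (T1.map fun q => q.2 * relu (t - q.1)).sum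

lemma pl_approx (ψ : ℝ → ℝ) (hψ : ∀ s t : ℝ, |ψ s - ψ t| ≤ |s - t|) (a : ℝ) (δ : ℝ)
    (hδ : 0 < δ) (k : ℕ) :
    ∃ T1 : List (ℝ × ℝ),
      (∀ t ∈ Set.Icc a (a + k * δ), |ψ t - (ψ a + PL T1 t)| ≤ δ) ∧
      (∀ t, a + k * δ ≤ t → ψ a + PL T1 t = ψ (a + k * δ)) := by
  induction k with
  | zero =>
      refine ⟨[], ?_, ?_⟩
      · intro t ht
        have : t = a := by
          simp only [Nat.cast_zero, zero_mul, add_zero] at ht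
          exact le_antisymm ht.2 ht.1
        simp only [this, PL, List.map_nil, List.sum_nil, add_zero, sub_self, abs_zero]
        linarith
      · intro t _
        simp [PL]
  | succ k ih =>
      obtain ⟨T1, hT1, hT1c⟩ := ih
      set b := a + k * δ with hb
      set b' := a + (k + 1 : ℕ) * δ with hb'
      have hbb' : b' = b + δ := by rw [hb, hb']; push_cast; ring
      set s' := (ψ b' - ψ b) / δ with hs'
      refine ⟨T1 ++ [(b, s'), (b', -s')], ?_, ?_⟩
      · intro t ht
        have hPL : PL (T1 ++ [(b, s'), (b', -s')]) t
            = PL T1 t + s' * relu (t - b) + -s' * relu (t - b') := by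
          simp [PL]; ring
        rcases le_or_gt t b with hcase | hcase
        · rw [hPL, relu_of_nonpos (by linarith), relu_of_nonpos (by linarith)]
          have : t ∈ Set.Icc a b := ⟨ht.1, hcase⟩
          have := hT1 t this
          calc |ψ t - (ψ a + (PL T1 t + s' * 0 + -s' * 0))|
              = |ψ t - (ψ a + PL T1 t)| := by ring_nf
            _ ≤ δ := this
        · have htb' : t ≤ b' := ht.2
          have h1 : relu (t - b) = t - b := relu_of_nonneg (by linarith)
          have h2 : relu (t - b') = 0 := relu_of_nonpos (by linarith)
          have hconst : ψ a + PL T1 t = ψ b := hT1c t (le_of_lt hcase)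
          rw [hPL, h1, h2]
          have hrw : ψ t - (ψ a + (PL T1 t + s' * (t - b) + -s' * 0))
              = ψ t - (ψ b + s' * (t - b)) := by
            rw [← hconst]; ring
          rw [hrw]
          set lam := (t - b) / δ with hlam
          have hlam0 : 0 ≤ lam := by
            apply div_nonneg (by linarith) (le_of_lt hδ)
          have hlam1 : lam ≤ 1 := by
            rw [hlam, div_le_one hδ]; linarith
          have hdecomp : ψ b + s' * (t - b) = (1 - lam) * ψ b + lam * ψ b' := by
            rw [hs', hlam]
            field_simp
            ring
          rw [hdecomp]
          have key : ψ t - ((1 - lam) * ψ b + lam * ψ b')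
              = (1 - lam) * (ψ t - ψ b) + lam * (ψ t - ψ b') := by ring
          rw [key]
          calc |(1 - lam) * (ψ t - ψ b) + lam * (ψ t - ψ b')|
              ≤ |(1 - lam) * (ψ t - ψ b)| + |lam * (ψ t - ψ b')| := abs_add_le _ _
            _ = (1 - lam) * |ψ t - ψ b| + lam * |ψ t - ψ b'| := by
                rw [abs_mul, abs_mul, abs_of_nonneg (by linarith), abs_of_nonneg hlam0]
            _ ≤ (1 - lam) * |t - b| + lam * |t - b'| := by
                apply add_le_add
                · exact mul_le_mul_of_nonneg_left (hψ t b) (by linarith)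
                · exact mul_le_mul_of_nonneg_left (hψ t b') hlam0
            _ ≤ (1 - lam) * δ + lam * δ := by
                apply add_le_add
                · apply mul_le_mul_of_nonneg_left _ (by linarith : (0:ℝ) ≤ 1 - lam)
                  rw [abs_of_nonneg (by linarith)]; linarith
                · apply mul_le_mul_of_nonneg_left _ hlam0
                  rw [abs_of_nonpos (by linarith)]; linarith
            _ = δ := by ring
      · intro t htge
        have hPL : PL (T1 ++ [(b, s'), (b', -s')]) t
            = PL T1 t + s' * relu (t - b) + -s' * relu (t - b') := by
          simp [PL]; ring
        have h1 : relu (t - b) = t - b := relu_of_nonneg (by rw [hbb'] at htge; linarith)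
        have h2 : relu (t - b') = t - b' := relu_of_nonneg (by linarith)
        have hconst : ψ a + PL T1 t = ψ b := hT1c t (by rw [hbb'] at htge; linarith)
        rw [hPL, h1, h2]
        have : ψ a + (PL T1 t + s' * (t - b) + -s' * (t - b')) = ψ b + s' * (b' - b) := by
          rw [← hconst]; ring
        rw [this]
        have hd : b' - b = δ := by rw [hbb']; ring
        rw [hd, hs']
        have : ψ b + (ψ b' - ψ b) / δ * δ = ψ b' := by field_simp; ring
        rw [this, hbb']

lemma cos_lip (s t : ℝ) : |Real.cos s - Real.cos t| ≤ |s - t| := by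
  rw [Real.cos_sub_cos, abs_mul, abs_mul]
  have h2 : |(-2 : ℝ)| = 2 := by norm_num
  rw [h2]
  calc 2 * |Real.sin ((s + t) / 2)| * |Real.sin ((s - t) / 2)|
      ≤ 2 * 1 * |(s - t) / 2| := by
        apply mul_le_mul
        · exact mul_le_mul_of_nonneg_left (Real.abs_sin_le_one _) (by norm_num)
        · exact Real.abs_sin_le_abs
        · exact abs_nonneg _
        · norm_num
    _ = |s - t| := by rw [abs_div]; rw [abs_of_nonneg (by norm_num : (0:ℝ) ≤ 2)]; ring

/-- piecewise-linear approximation of `cos` on `[-M, M]` -/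
lemma cos_pl (M ε : ℝ) (hε : 0 < ε) :
    ∃ (T1 : List (ℝ × ℝ)) (c₀ : ℝ),
      ∀ t ∈ Set.Icc (-M) M, |Real.cos t - (c₀ + PL T1 t)| ≤ ε := by
  obtain ⟨k, hk⟩ := exists_nat_ge (2 * M / ε)
  obtain ⟨T1, hT1, _⟩ := pl_approx Real.cos cos_lip (-M) ε hε k
  refine ⟨T1, Real.cos (-M), ?_⟩
  intro t ht
  apply hT1 t
  refine ⟨ht.1, ?_⟩
  have : 2 * M ≤ k * ε := by
    rcases le_or_gt (2 * M) 0 with h | h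
    · have : (0:ℝ) ≤ k * ε := by positivity
      linarith
    · rw [div_le_iff₀ hε] at hk; linarith
  have := ht.2
  linarith

end NN

-- ============ Stone–Weierstrass: uniform approximation by shallow sums ============
namespace NN
variable {n : ℕ}

lemma SH_append (T T' : List ((Fin n → ℝ) × ℝ × ℝ)) (x : Fin n → ℝ) :
    SH (T ++ T') x = SH T x + SH T' x := by
  simp [SH]

lemma SH_flatten (L : List (List ((Fin n → ℝ) × ℝ × ℝ))) (x : Fin n → ℝ) :
    SH L.flatten x = (L.map (fun T => SH T x)).sum := by
  induction L with
  | nil => simp [SH]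
  | cons T L ih => rw [List.flatten_cons, SH_append, ih, List.map_cons, List.sum_cons]

lemma SH_scale_pl (a : Fin n → ℝ) (b c : ℝ) (T1 : List (ℝ × ℝ)) (x : Fin n → ℝ) :
    SH (T1.map fun q => (a, b - q.1, c * q.2)) x = c * PL T1 (dot a x + b) := by
  induction T1 with
  | nil => simp [SH, PL]
  | cons q T1 ih =>
      rw [List.map_cons]
      have e1 : SH ((a, b - q.1, c * q.2) :: T1.map fun q => (a, b - q.1, c * q.2)) x
          = c * q.2 * relu (dot a x + (b - q.1))
            + SH (T1.map fun q => (a, b - q.1, c * q.2)) x := by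
        simp [SH]
      have e2 : PL (q :: T1) (dot a x + b)
          = q.2 * relu ((dot a x + b) - q.1) + PL T1 (dot a x + b) := by
        simp [PL]
      rw [e1, e2, ih]
      have : dot a x + (b - q.1) = dot a x + b - q.1 := by ring
      rw [this]
      ring

lemma dot_bound (a x : Fin n → ℝ) (R : ℝ) (hx : ∀ i, |x i| ≤ R) (hR : 0 ≤ R) :
    |dot a x| ≤ (∑ i, |a i|) * R := by
  unfold dot
  calc |∑ i, a i * x i| ≤ ∑ i, |a i * x i| := Finset.abs_sum_le_sum_abs _ _
    _ ≤ ∑ i, |a i| * R := by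
        apply Finset.sum_le_sum
        intro i _
        rw [abs_mul]
        exact mul_le_mul_of_nonneg_left (hx i) (abs_nonneg _)
    _ = (∑ i, |a i|) * R := by rw [← Finset.sum_mul]

/-- the cosine continuous map on a subset -/
def cosF (K : Set (Fin n → ℝ)) (a : Fin n → ℝ) (b : ℝ) : C(K, ℝ) :=
  ⟨fun x => Real.cos (dot a (x : Fin n → ℝ) + b),
    Real.continuous_cos.comp (((dot_cont a).comp continuous_subtype_val).add continuous_const)⟩

/-- every continuous function on a compact set is uniformly approximated by shallow sums -/
lemma key_unif (K : Set (Fin n → ℝ)) (hK : IsCompact K) (f : (Fin n → ℝ) → ℝ)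
    (hf : ContinuousOn f K) (ε : ℝ) (hε : 0 < ε) :
    ∃ (T : List ((Fin n → ℝ) × ℝ × ℝ)) (c₀ : ℝ), ∀ x ∈ K, |f x - (c₀ + SH T x)| < ε := by
  haveI : CompactSpace K := isCompact_iff_compactSpace.mp hK
  -- the span of cosines of affine functionals
  set S : Set C(K, ℝ) := {g | ∃ (a : Fin n → ℝ) (b : ℝ), g = cosF K a b} with hS
  set P : Submodule ℝ C(K, ℝ) := Submodule.span ℝ S with hP
  have hone : (1 : C(K, ℝ)) ∈ P := by
    have : (1 : C(K, ℝ)) = cosF K 0 0 := by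
      ext x
      simp [cosF, dot_zero]
    rw [this]
    exact Submodule.subset_span ⟨0, 0, rfl⟩
  have hmulS : ∀ g h : C(K, ℝ), g ∈ S → h ∈ S → g * h ∈ P := by
    rintro g h ⟨a, b, rfl⟩ ⟨a', b', rfl⟩
    have key : cosF K a b * cosF K a' b'
        = (1/2 : ℝ) • cosF K (a + a') (b + b') + (1/2 : ℝ) • cosF K (a - a') (b - b') := by
      ext x
      simp only [ContinuousMap.mul_apply, ContinuousMap.add_apply, ContinuousMap.smul_apply,
        smul_eq_mul, cosF, ContinuousMap.coe_mk]
      have hda : dot (a + a') (x : Fin n → ℝ) = dot a x + dot a' x := dot_add_left a a' _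
      have hds : dot (a - a') (x : Fin n → ℝ) = dot a x - dot a' x := by
        have : a - a' = a + (-a') := by ring
        rw [this, dot_add_left, dot_neg_left]; ring
      rw [hda, hds]
      have e1 : dot a (x : Fin n → ℝ) + dot a' x + (b + b')
          = (dot a x + b) + (dot a' x + b') := by ring
      have e2 : dot a (x : Fin n → ℝ) - dot a' x + (b - b')
          = (dot a x + b) - (dot a' x + b') := by ring
      rw [e1, e2]
      have cosmul : ∀ p q : ℝ, Real.cos p * Real.cos q
          = 1/2 * Real.cos (p + q) + 1/2 * Real.cos (p - q) := by
        intro p q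
        rw [Real.cos_add, Real.cos_sub]
        ring
      rw [cosmul]
    rw [key]
    exact Submodule.add_mem _
      (Submodule.smul_mem _ _ (Submodule.subset_span ⟨a + a', b + b', rfl⟩))
      (Submodule.smul_mem _ _ (Submodule.subset_span ⟨a - a', b - b', rfl⟩))
  have hmul : ∀ g h : C(K, ℝ), g ∈ P → h ∈ P → g * h ∈ P := by
    have hPP : P * P ≤ P := by
      rw [hP, Submodule.span_mul_span]
      apply Submodule.span_le.mpr
      rintro z hz
      rw [Set.mem_mul] at hz
      obtain ⟨g, hg, h, hh, rfl⟩ := hz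
      exact hmulS g h hg hh
    intro g h hg hh
    exact Submodule.mul_le.mp hPP g hg h hh
  set A : Subalgebra ℝ C(K, ℝ) := P.toSubalgebra hone hmul with hA
  have hsep : A.SeparatesPoints := by
    intro x y hxy
    have hvne : (x : Fin n → ℝ) ≠ (y : Fin n → ℝ) := fun h => hxy (Subtype.ext h)
    have : ∃ j, (x : Fin n → ℝ) j ≠ (y : Fin n → ℝ) j := by
      by_contra hcon
      push_neg at hcon
      exact hvne (funext hcon)
    obtain ⟨j, hj⟩ := this
    set m := max |(x : Fin n → ℝ) j| |(y : Fin n → ℝ) j| with hm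
    have hm0 : 0 ≤ m := le_trans (abs_nonneg _) (le_max_left _ _)
    set s := (Real.pi / 2) / (m + 1) with hs
    have hs0 : 0 < s := by
      apply div_pos (by positivity) (by linarith)
    have hbound : ∀ t : ℝ, |t| ≤ m → s * t ∈ Set.Icc (-(Real.pi/2)) (Real.pi/2) := by
      intro t ht
      have h1 : |s * t| ≤ Real.pi / 2 := by
        rw [abs_mul, abs_of_pos hs0, hs]
        rw [div_mul_eq_mul_div, div_le_iff₀ (by linarith)]
        have : |t| * (Real.pi/2) ≤ m * (Real.pi/2) :=
          mul_le_mul_of_nonneg_right ht (by positivity)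
        calc Real.pi / 2 * |t| = |t| * (Real.pi/2) := by ring
          _ ≤ m * (Real.pi/2) := this
          _ ≤ Real.pi / 2 * (m+1) := by nlinarith [Real.pi_pos]
      exact abs_le.mp h1
    refine ⟨(cosF K (Pi.single j s) (-(Real.pi/2)) : C(K,ℝ)), ⟨cosF K (Pi.single j s) (-(Real.pi/2)), ?_, rfl⟩, ?_⟩
    · show cosF K (Pi.single j s) (-(Real.pi/2)) ∈ A
      exact Submodule.subset_span ⟨Pi.single j s, -(Real.pi/2), rfl⟩
    · show (cosF K (Pi.single j s) (-(Real.pi/2))) x ≠ (cosF K (Pi.single j s) (-(Real.pi/2))) y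
      have heval : ∀ z : K, (cosF K (Pi.single j s) (-(Real.pi/2))) z
          = Real.sin (s * (z : Fin n → ℝ) j) := by
        intro z
        show Real.cos (dot (Pi.single j s) (z : Fin n → ℝ) + -(Real.pi/2)) = _
        rw [dot_single]
        have : s * (z : Fin n → ℝ) j + -(Real.pi / 2) = -(Real.pi/2 - s * (z : Fin n → ℝ) j) := by
          ring
        rw [this, Real.cos_neg, Real.cos_pi_div_two_sub]
      rw [heval x, heval y]
      intro hcon
      have hinj := Real.injOn_sin
        (hbound _ (le_max_left _ _)) (hbound _ (le_max_right _ _)) hcon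
      have : (x : Fin n → ℝ) j = (y : Fin n → ℝ) j := by
        have := mul_left_cancel₀ (ne_of_gt hs0) hinj
        exact this
      exact hj this
  -- apply Stone–Weierstrass
  obtain ⟨g, hg⟩ := ContinuousMap.exists_mem_subalgebra_near_continuous_of_separatesPoints
    A hsep (K.restrict f) hf.restrict (ε/2) (by linarith)
  have hgP : (g : C(K, ℝ)) ∈ P := g.2
  rw [hP, Submodule.mem_span_set'] at hgP
  obtain ⟨N, c, v, hsum⟩ := hgP
  -- bound on K
  obtain ⟨R₀, hR₀⟩ := (hK.isBounded).exists_norm_le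
  set R := max R₀ 0 with hR
  have hR0 : 0 ≤ R := le_max_right _ _
  have hxR : ∀ x ∈ K, ∀ i, |x i| ≤ R := by
    intro x hx i
    calc |x i| = ‖x i‖ := (Real.norm_eq_abs _).symm
      _ ≤ ‖x‖ := norm_le_pi_norm x i
      _ ≤ R₀ := hR₀ x hx
      _ ≤ R := le_max_left _ _
  -- data of each cosine
  have hvi : ∀ i : Fin N, ∃ (a : Fin n → ℝ) (b : ℝ), (v i : C(K, ℝ)) = cosF K a b :=
    fun i => (v i).2
  choose av bv hv using hvi
  set ε' := ε / (2 * ((∑ i, |c i|) + 1)) with hε'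
  have hc1 : 0 < (∑ i, |c i|) + 1 := by positivity
  have hε'0 : 0 < ε' := by
    rw [hε']
    positivity
  have hpl : ∀ i : Fin N, ∃ (T1 : List (ℝ × ℝ)) (d₀ : ℝ),
      ∀ t ∈ Set.Icc (-((∑ j, |av i j|) * R + |bv i|)) ((∑ j, |av i j|) * R + |bv i|),
        |Real.cos t - (d₀ + PL T1 t)| ≤ ε' :=
    fun i => cos_pl _ ε' hε'0
  choose Tv dv hTv using hpl
  set TT := (List.ofFn fun i => (Tv i).map fun q => (av i, bv i - q.1, c i * q.2)).flatten with hTTdef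
  refine ⟨TT, ∑ i, c i * dv i, ?_⟩
  intro x hx
  have hSH : SH TT x
      = ∑ i, c i * PL (Tv i) (dot (av i) x + bv i) := by
    rw [hTTdef]
    rw [SH_flatten, List.map_ofFn]
    rw [List.sum_ofFn]
    apply Finset.sum_congr rfl
    intro i _
    exact SH_scale_pl (av i) (bv i) (c i) (Tv i) x
  have hgx : (g : C(K, ℝ)) ⟨x, hx⟩ = ∑ i, c i * Real.cos (dot (av i) x + bv i) := by
    rw [← hsum]
    rw [ContinuousMap.sum_apply]
    apply Finset.sum_congr rfl
    intro i _
    rw [ContinuousMap.smul_apply, hv i]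
    show c i • Real.cos (dot (av i) x + bv i) = _
    rw [smul_eq_mul]
  have hterm : ∀ i : Fin N,
      |Real.cos (dot (av i) x + bv i) - (dv i + PL (Tv i) (dot (av i) x + bv i))| ≤ ε' := by
    intro i
    apply hTv i
    constructor
    · have h1 : |dot (av i) x| ≤ (∑ j, |av i j|) * R := dot_bound _ _ R (hxR x hx) hR0
      have := abs_le.mp h1
      have hb := abs_le.mp (le_refl |bv i|)
      have := neg_abs_le (bv i)
      nlinarith [abs_le.mp h1, neg_abs_le (bv i), le_abs_self (bv i)]
    · have h1 : |dot (av i) x| ≤ (∑ j, |av i j|) * R := dot_bound _ _ R (hxR x hx) hR0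
      nlinarith [abs_le.mp h1, neg_abs_le (bv i), le_abs_self (bv i)]
  have hmid : |(g : C(K, ℝ)) ⟨x, hx⟩ - ((∑ i, c i * dv i) + SH TT x)| ≤ (∑ i, |c i|) * ε' := by
    rw [hgx, hSH]
    have : (∑ i, c i * Real.cos (dot (av i) x + bv i))
        - ((∑ i, c i * dv i) + ∑ i, c i * PL (Tv i) (dot (av i) x + bv i))
        = ∑ i, c i * (Real.cos (dot (av i) x + bv i)
            - (dv i + PL (Tv i) (dot (av i) x + bv i))) := by
      rw [← Finset.sum_add_distrib, ← Finset.sum_sub_distrib]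
      apply Finset.sum_congr rfl
      intro i _
      ring
    rw [this]
    calc |∑ i, c i * (Real.cos (dot (av i) x + bv i)
            - (dv i + PL (Tv i) (dot (av i) x + bv i)))|
        ≤ ∑ i, |c i * (Real.cos (dot (av i) x + bv i)
            - (dv i + PL (Tv i) (dot (av i) x + bv i)))| := Finset.abs_sum_le_sum_abs _ _
      _ ≤ ∑ i, |c i| * ε' := by
          apply Finset.sum_le_sum
          intro i _
          rw [abs_mul]
          exact mul_le_mul_of_nonneg_left (hterm i) (abs_nonneg _)
      _ = (∑ i, |c i|) * ε' := by rw [← Finset.sum_mul]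
  have hclose : |f x - (g : C(K, ℝ)) ⟨x, hx⟩| < ε/2 := by
    have := hg ⟨x, hx⟩
    rw [Real.norm_eq_abs] at this
    have hrf : K.restrict f ⟨x, hx⟩ = f x := rfl
    rw [hrf] at this
    rw [abs_sub_comm]
    exact this
  have hfin : (∑ i, |c i|) * ε' < ε/2 := by
    rw [hε']
    rw [div_eq_mul_inv, ← mul_assoc]
    have h2 : (0:ℝ) < (2 * ((∑ i, |c i|) + 1))⁻¹ := by positivity
    have hlt : (∑ i, |c i|) * ε < ((∑ i, |c i|) + 1) * ε := by nlinarith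
    calc (∑ i, |c i|) * ε * (2 * ((∑ i, |c i|) + 1))⁻¹
        < ((∑ i, |c i|) + 1) * ε * (2 * ((∑ i, |c i|) + 1))⁻¹ :=
          mul_lt_mul_of_pos_right hlt h2
      _ = ε/2 := by field_simp
  calc |f x - ((∑ i, c i * dv i) + SH TT x)|
      ≤ |f x - (g : C(K, ℝ)) ⟨x, hx⟩|
        + |(g : C(K, ℝ)) ⟨x, hx⟩ - ((∑ i, c i * dv i) + SH TT x)| := abs_sub_le _ _ _
    _ < ε/2 + (∑ i, |c i|) * ε' := by
        apply add_lt_add_of_lt_of_le hclose hmid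
    _ < ε/2 + ε/2 := by linarith [hfin]
    _ = ε := by ring

end NN

-- ============ clamp pointwise lemmas ============
namespace NN

lemma clamp_eq {φ u : ℝ} (h : |u| ≤ φ) : relu (2*φ - relu (φ - u)) - φ = u := by
  obtain ⟨h1, h2⟩ := abs_le.mp h
  rw [relu_of_nonneg (by linarith : (0:ℝ) ≤ φ - u)]
  rw [relu_of_nonneg (by linarith : (0:ℝ) ≤ 2*φ - (φ - u))]
  ring

lemma clamp_abs {φ u : ℝ} (hφ : 0 ≤ φ) : |relu (2*φ - relu (φ - u)) - φ| ≤ φ := by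
  rw [abs_le]
  constructor
  · have := relu_nonneg (2*φ - relu (φ - u))
    linarith
  · have h1 : relu (2*φ - relu (φ - u)) ≤ relu (2*φ) := by
      apply relu_mono
      have := relu_nonneg (φ - u)
      linarith
    rw [relu_of_nonneg (by linarith : (0:ℝ) ≤ 2*φ)] at h1
    linarith

end NN

open NN in
theorem stmt_11' (n₀ : ℕ) (h₀ : 1 ≤ n₀) :
    (∀ K : Set (Fin n₀ → ℝ), IsCompact K → ∀ f : (Fin n₀ → ℝ) → ℝ, ContinuousOn f K →
      ∀ ε : ℝ, 0 < ε →
        ∃ (Lc : ℕ) (g : (Fin n₀ → ℝ) → Fin 1 → ℝ),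
          Computes n₀ (List.replicate Lc (2 * n₀ + 6)) 1 g ∧
          ∀ x ∈ K, |f x - g x 0| < ε) := by
  intro K hK f hf ε hε
  obtain ⟨T, c₀, hT⟩ := key_unif K hK f hf ε hε
  obtain ⟨Lc, g, hcomp, hval, _⟩ := shallow_exact T c₀
  refine ⟨Lc, g, hcomp, ?_⟩
  intro x hx
  rw [hval x]
  exact hT x hx

-- ============ part (i) : Lp approximation ============
namespace NN
variable {n : ℕ}

lemma vol_cube (n : ℕ) (r : ℝ) (hr : 0 ≤ r) :
    volume (Metric.closedBall (0 : Fin n → ℝ) r) = ENNReal.ofReal ((2*r)^n) := by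
  rw [closedBall_pi _ hr, volume_pi_pi]
  have : ∀ i : Fin n, volume (Metric.closedBall ((0 : Fin n → ℝ) i) r) = ENNReal.ofReal (2*r) := by
    intro i
    rw [Real.volume_closedBall]
  rw [Finset.prod_congr rfl (fun i _ => this i), Finset.prod_const, Finset.card_univ,
    Fintype.card_fin, ← ENNReal.ofReal_pow (by linarith)]

/-- the cutoff term list -/
def cutT (n : ℕ) (R η : ℝ) : List ((Fin n → ℝ) × ℝ × ℝ) :=
  ((List.finRange n).map fun i => ((Pi.single i 1 : Fin n → ℝ), -R, η⁻¹))
    ++ ((List.finRange n).map fun i => ((Pi.single i (-1) : Fin n → ℝ), -R, η⁻¹))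

lemma cutT_nonneg (R η : ℝ) (hη : 0 < η) (x : Fin n → ℝ) : 0 ≤ SH (cutT n R η) x := by
  unfold SH
  apply List.sum_nonneg
  intro y hy
  rw [List.mem_map] at hy
  obtain ⟨t, ht, rfl⟩ := hy
  unfold cutT at ht
  rw [List.mem_append, List.mem_map, List.mem_map] at ht
  have hc : t.2.2 = η⁻¹ := by
    rcases ht with ⟨i, _, rfl⟩ | ⟨i, _, rfl⟩ <;> rfl
  rw [hc]
  have := relu_nonneg (dot t.1 x + t.2.1)
  positivity

lemma cutT_zero (R η : ℝ) (hη : 0 < η) (x : Fin n → ℝ) (hx : ∀ i, |x i| ≤ R) :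
    SH (cutT n R η) x = 0 := by
  unfold SH
  apply List.sum_eq_zero
  intro y hy
  rw [List.mem_map] at hy
  obtain ⟨t, ht, rfl⟩ := hy
  unfold cutT at ht
  rw [List.mem_append, List.mem_map, List.mem_map] at ht
  rcases ht with ⟨i, _, rfl⟩ | ⟨i, _, rfl⟩
  · simp only [dot_single, one_mul]
    rw [relu_of_nonpos (by have := abs_le.mp (hx i); linarith), mul_zero]
  · simp only [dot_single, neg_one_mul]
    rw [relu_of_nonpos (by have := abs_le.mp (hx i); linarith), mul_zero]

lemma cutT_ge_one (R η : ℝ) (hη : 0 < η) (x : Fin n → ℝ) (i : Fin n) (hi : R + η ≤ |x i|) :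
    1 ≤ SH (cutT n R η) x := by
  have hterm : ∀ y ∈ (cutT n R η).map fun t => t.2.2 * relu (dot t.1 x + t.2.1), 0 ≤ y := by
    intro y hy
    rw [List.mem_map] at hy
    obtain ⟨t, ht, rfl⟩ := hy
    unfold cutT at ht
    rw [List.mem_append, List.mem_map, List.mem_map] at ht
    have hc : t.2.2 = η⁻¹ := by
      rcases ht with ⟨j, _, rfl⟩ | ⟨j, _, rfl⟩ <;> rfl
    rw [hc]
    have := relu_nonneg (dot t.1 x + t.2.1)
    positivity
  rcases abs_le.mp (le_refl |x i|) with _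
  rcases le_or_gt 0 (x i) with hxi | hxi
  · -- x i ≥ R + η
    have hxi' : R + η ≤ x i := by
      rw [abs_of_nonneg hxi] at hi; exact hi
    have hmem : (η⁻¹ * relu (dot (Pi.single i 1 : Fin n → ℝ) x + -R))
        ∈ (cutT n R η).map fun t => t.2.2 * relu (dot t.1 x + t.2.1) := by
      rw [List.mem_map]
      exact ⟨((Pi.single i 1 : Fin n → ℝ), -R, η⁻¹), by
        unfold cutT
        rw [List.mem_append, List.mem_map]
        exact Or.inl ⟨i, List.mem_finRange i, rfl⟩, rfl⟩
    have hval : 1 ≤ η⁻¹ * relu (dot (Pi.single i 1 : Fin n → ℝ) x + -R) := by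
      rw [dot_single, one_mul]
      have h1 : η ≤ relu (x i + -R) := by
        rw [relu_of_nonneg (by linarith)]; linarith
      calc (1:ℝ) = η⁻¹ * η := by field_simp
        _ ≤ η⁻¹ * relu (x i + -R) := by
            apply mul_le_mul_of_nonneg_left h1 (by positivity)
    calc (1:ℝ) ≤ η⁻¹ * relu (dot (Pi.single i 1 : Fin n → ℝ) x + -R) := hval
      _ ≤ SH (cutT n R η) x := List.single_le_sum hterm _ hmem
  · -- x i ≤ -(R + η)
    have hxi' : R + η ≤ -x i := by
      rw [abs_of_neg hxi] at hi; exact hi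
    have hmem : (η⁻¹ * relu (dot (Pi.single i (-1) : Fin n → ℝ) x + -R))
        ∈ (cutT n R η).map fun t => t.2.2 * relu (dot t.1 x + t.2.1) := by
      rw [List.mem_map]
      exact ⟨((Pi.single i (-1) : Fin n → ℝ), -R, η⁻¹), by
        unfold cutT
        rw [List.mem_append]
        exact Or.inr (by rw [List.mem_map]; exact ⟨i, List.mem_finRange i, rfl⟩), rfl⟩
    have hval : 1 ≤ η⁻¹ * relu (dot (Pi.single i (-1) : Fin n → ℝ) x + -R) := by
      rw [dot_single, neg_one_mul]
      have h1 : η ≤ relu (-x i + -R) := by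
        rw [relu_of_nonneg (by linarith)]; linarith
      calc (1:ℝ) = η⁻¹ * η := by field_simp
        _ ≤ η⁻¹ * relu (-x i + -R) := by
            apply mul_le_mul_of_nonneg_left h1 (by positivity)
    calc (1:ℝ) ≤ η⁻¹ * relu (dot (Pi.single i (-1) : Fin n → ℝ) x + -R) := hval
      _ ≤ SH (cutT n R η) x := List.single_le_sum hterm _ hmem

end NN

open NN in
theorem stmt_11_lp (n₀ : ℕ) :
    ∀ p : ℝ, 1 ≤ p → ∀ f : (Fin n₀ → ℝ) → ℝ,
      MeasureTheory.MemLp f (ENNReal.ofReal p) MeasureTheory.volume → ∀ ε : ℝ, 0 < ε →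
        ∃ (Lc : ℕ) (g : (Fin n₀ → ℝ) → Fin 1 → ℝ),
          Computes n₀ (List.replicate Lc (2 * n₀ + 6)) 1 g ∧
          MeasureTheory.eLpNorm (fun x => f x - g x 0) (ENNReal.ofReal p) MeasureTheory.volume
            < ENNReal.ofReal ε := by
  intro p hp f hf ε hε
  have hp0 : 0 < p := by linarith
  set pp := ENNReal.ofReal p with hpp
  have hpp1 : 1 ≤ pp := ENNReal.one_le_ofReal.mpr hp
  have hppne0 : pp ≠ 0 := by
    rw [hpp, ← ENNReal.ofReal_zero]
    intro h
    have := ENNReal.ofReal_eq_ofReal_iff (le_of_lt hp0) le_rfl |>.mp h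
    linarith
  have hppnetop : pp ≠ ⊤ := ENNReal.ofReal_ne_top
  have hpt : pp.toReal = p := ENNReal.toReal_ofReal (le_of_lt hp0)
  have hptpos : 0 < pp.toReal := by rw [hpt]; exact hp0
  -- step 1 : continuous compactly supported approximation
  obtain ⟨g, hgsupp, hgclose, hgcont, hgmem⟩ :=
    hf.exists_hasCompactSupport_eLpNorm_sub_le hppnetop
      (ε := ENNReal.ofReal (ε/4)) (by simp [ENNReal.ofReal_eq_zero]; linarith)
  -- step 2 : support radius
  obtain ⟨R₀, hR₀⟩ := hgsupp.isBounded.exists_norm_le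
  set R := max R₀ 1 with hRdef
  have hR1 : (1:ℝ) ≤ R := le_max_right _ _
  have hR0 : (0:ℝ) ≤ R := by linarith
  have hgzero : ∀ x : Fin n₀ → ℝ, ¬ (∀ i, |x i| ≤ R) → g x = 0 := by
    intro x hx
    apply image_eq_zero_of_notMem_tsupport
    intro hmem
    apply hx
    intro i
    have h1 : ‖x‖ ≤ R₀ := hR₀ x hmem
    calc |x i| = ‖x i‖ := (Real.norm_eq_abs _).symm
      _ ≤ ‖x‖ := norm_le_pi_norm x i
      _ ≤ R₀ := h1
      _ ≤ R := le_max_left _ _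
  -- step 3 : sup bound on g
  obtain ⟨A₀, hA₀⟩ := hgsupp.exists_bound_of_continuous hgcont
  have hA₀0 : 0 ≤ A₀ := le_trans (norm_nonneg _) (hA₀ 0)
  set A := A₀ + 1 with hAdef
  have hA1 : (1:ℝ) ≤ A := by linarith
  have hA0 : (0:ℝ) < A := by linarith
  have hgA : ∀ x, |g x| ≤ A₀ := fun x => by rw [← Real.norm_eq_abs]; exact hA₀ x
  -- step 4 : choose η
  set β := (ε/(4*A))^p with hβdef
  have hβ0 : 0 < β := by
    apply Real.rpow_pos_of_pos
    positivity
  have hcont : ContinuousAt (fun η : ℝ => (2*(R+η))^n₀) 0 := by fun_prop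
  have hev : ∀ᶠ η in nhds (0:ℝ), |(2*(R+η))^n₀ - (2*(R+0))^n₀| < β := by
    have := Metric.continuousAt_iff.mp hcont β hβ0
    obtain ⟨δ', hδ'0, hδ'⟩ := this
    rw [Metric.eventually_nhds_iff]
    refine ⟨δ', hδ'0, ?_⟩
    intro η hη
    have := hδ' hη
    rw [Real.dist_eq] at this
    exact this
  rw [Metric.eventually_nhds_iff] at hev
  obtain ⟨δ', hδ'0, hδ'⟩ := hev
  set η := min (δ'/2) 1 with hηdef
  have hη0 : 0 < η := by
    apply lt_min (by linarith) one_pos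
  have hη1 : η ≤ 1 := min_le_right _ _
  have hηβ : (2*(R+η))^n₀ - (2*R)^n₀ < β := by
    have h1 : dist η 0 < δ' := by
      rw [Real.dist_eq, sub_zero, abs_of_pos hη0]
      calc η ≤ δ'/2 := min_le_left _ _
        _ < δ' := by linarith
    have := hδ' h1
    rw [add_zero] at this
    calc (2*(R+η))^n₀ - (2*R)^n₀ ≤ |(2*(R+η))^n₀ - (2*R)^n₀| := le_abs_self _
      _ < β := this
  -- step 5 : uniform approximation on the big ball
  set K' := Metric.closedBall (0 : Fin n₀ → ℝ) (R+1) with hK'def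
  have hK'c : IsCompact K' := isCompact_closedBall _ _
  set V := (MeasureTheory.volume K') ^ (1 / pp.toReal) with hVdef
  have hVne : V ≠ ⊤ := by
    apply ENNReal.rpow_ne_top_of_nonneg (by positivity)
    exact (MeasureTheory.measure_closedBall_lt_top).ne
  set δ := min 1 ((ε/4) / (V.toReal + 1)) with hδdef
  have hVt0 : 0 ≤ V.toReal := ENNReal.toReal_nonneg
  have hδ0 : 0 < δ := by
    apply lt_min one_pos
    apply div_pos (by linarith) (by linarith)
  have hδle1 : δ ≤ 1 := min_le_left _ _
  obtain ⟨T, c₀, hT⟩ := key_unif K' hK'c g hgcont.continuousOn δ hδ0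
  -- step 6 : the network
  obtain ⟨Lc, net, hnetcomp, hnetval, hnetcont⟩ := clamp_exact T (cutT n₀ R η) c₀ A
  refine ⟨Lc, net, hnetcomp, ?_⟩
  set h : (Fin n₀ → ℝ) → ℝ := fun x => net x 0 with hhdef
  set Φ : (Fin n₀ → ℝ) → ℝ := fun x => relu (A - A * SH (cutT n₀ R η) x) with hΦdef
  set u : (Fin n₀ → ℝ) → ℝ := fun x => c₀ + SH T x with hudef
  have hh : ∀ x, h x = relu (2 * Φ x - relu (Φ x - u x)) - Φ x := fun x => hnetval x
  have hΦnn : ∀ x, 0 ≤ Φ x := fun x => relu_nonneg _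
  have hΦA : ∀ x, Φ x ≤ A := by
    intro x
    rw [hΦdef]
    have h1 : A - A * SH (cutT n₀ R η) x ≤ A := by
      have := cutT_nonneg R η hη0 x
      nlinarith
    calc relu (A - A * SH (cutT n₀ R η) x) ≤ relu A := relu_mono h1
      _ = A := relu_of_nonneg (le_of_lt hA0)
  have hΦin : ∀ x : Fin n₀ → ℝ, (∀ i, |x i| ≤ R) → Φ x = A := by
    intro x hx
    rw [hΦdef]
    simp only
    rw [cutT_zero R η hη0 x hx, mul_zero, sub_zero, relu_of_nonneg (le_of_lt hA0)]
  have hΦout : ∀ x : Fin n₀ → ℝ, ¬ (∀ i, |x i| ≤ R + η) → Φ x = 0 := by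
    intro x hx
    push_neg at hx
    obtain ⟨i, hi⟩ := hx
    rw [hΦdef]
    simp only
    have h1 : 1 ≤ SH (cutT n₀ R η) x := cutT_ge_one R η hη0 x i (le_of_lt hi)
    apply relu_of_nonpos
    nlinarith
  -- pointwise bound
  set ball1 := Metric.closedBall (0 : Fin n₀ → ℝ) (R+1) with hball1
  set shell := Metric.closedBall (0 : Fin n₀ → ℝ) (R+η) \ Metric.closedBall (0 : Fin n₀ → ℝ) R
    with hshell
  have hmem_ball : ∀ (x : Fin n₀ → ℝ) (r : ℝ), 0 ≤ r →
      (x ∈ Metric.closedBall (0 : Fin n₀ → ℝ) r ↔ ∀ i, |x i| ≤ r) := by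
    intro x r hr
    rw [Metric.mem_closedBall, dist_zero_right, pi_norm_le_iff_of_nonneg hr]
    constructor
    · intro hb i; rw [← Real.norm_eq_abs]; exact hb i
    · intro hb i; rw [Real.norm_eq_abs]; exact hb i
  have hpw : ∀ x : Fin n₀ → ℝ, |g x - h x| ≤
      (ball1.indicator (fun _ => δ) x) + (shell.indicator (fun _ => A) x) := by
    intro x
    by_cases hin : ∀ i, |x i| ≤ R
    · -- inner region : h = u and |g - u| < δ
      have hxK' : x ∈ K' := by
        rw [hK'def, hmem_ball x (R+1) (by linarith)]
        intro i
        calc |x i| ≤ R := hin i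
          _ ≤ R + 1 := by linarith
      have hgu : |g x - u x| ≤ δ := le_of_lt (hT x hxK')
      have huA : |u x| ≤ Φ x := by
        rw [hΦin x hin]
        have h1 : |u x| ≤ |g x| + |g x - u x| := by
          have e : u x = g x + -(g x - u x) := by ring
          calc |u x| = |g x + -(g x - u x)| := congrArg _root_.abs e
            _ ≤ |g x| + |-(g x - u x)| := abs_add_le _ _
            _ = |g x| + |g x - u x| := by rw [abs_neg]
        calc |u x| ≤ |g x| + |g x - u x| := h1
          _ ≤ A₀ + δ := add_le_add (hgA x) hgu
          _ ≤ A := by rw [hAdef]; linarith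
      have : h x = u x := by rw [hh x]; exact clamp_eq huA
      rw [this]
      have hind1 : ball1.indicator (fun _ => δ) x = δ := by
        rw [Set.indicator_of_mem]
        rw [hball1, hmem_ball x (R+1) (by linarith)]
        intro i
        calc |x i| ≤ R := hin i
          _ ≤ R + 1 := by linarith
      have hind2 : 0 ≤ shell.indicator (fun _ => A) x := by
        apply Set.indicator_nonneg
        intro _ _
        linarith
      rw [hind1]
      linarith [hgu, hind2]
    · -- outer region : g = 0
      have hg0 : g x = 0 := hgzero x hin
      have hhb : |h x| ≤ Φ x := by rw [hh x]; exact clamp_abs (hΦnn x)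
      by_cases hin2 : ∀ i, |x i| ≤ R + η
      · -- shell
        have hxshell : x ∈ shell := by
          rw [hshell]
          constructor
          · rw [hmem_ball x (R+η) (by linarith)]; exact hin2
          · rw [hmem_ball x R hR0]; exact hin
        have hind2 : shell.indicator (fun _ => A) x = A := Set.indicator_of_mem hxshell _
        have hind1 : 0 ≤ ball1.indicator (fun _ => δ) x :=
          Set.indicator_nonneg (fun _ _ => le_of_lt hδ0) x
        rw [hg0, hind2]
        have : |0 - h x| = |h x| := by rw [zero_sub, abs_neg]
        rw [this]
        have := hΦA x
        linarith [hhb]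
      · -- far region : Φ = 0 so h = 0
        have hΦ0 : Φ x = 0 := hΦout x hin2
        have : h x = 0 := by
          have := hhb
          rw [hΦ0] at this
          exact abs_eq_zero.mp (le_antisymm this (abs_nonneg _))
        rw [hg0, this, sub_zero, abs_zero]
        have hind1 : 0 ≤ ball1.indicator (fun _ => δ) x :=
          Set.indicator_nonneg (fun _ _ => le_of_lt hδ0) x
        have hind2 : 0 ≤ shell.indicator (fun _ => A) x :=
          Set.indicator_nonneg (fun _ _ => le_of_lt hA0) x
        linarith
  -- eLpNorm estimates
  have hmeas_ball1 : MeasurableSet ball1 := Metric.isClosed_closedBall.measurableSet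
  have hmeas_shell : MeasurableSet shell :=
    (Metric.isClosed_closedBall.measurableSet).diff Metric.isClosed_closedBall.measurableSet
  have he1 : MeasureTheory.eLpNorm (ball1.indicator (fun _ => δ)) pp MeasureTheory.volume
      ≤ ENNReal.ofReal (ε/4) := by
    rw [MeasureTheory.eLpNorm_indicator_const hmeas_ball1 hppne0 hppnetop]
    have hnn : ‖δ‖ₑ = ENNReal.ofReal δ := by
      rw [← Real.enorm_eq_ofReal (le_of_lt hδ0)]
    rw [hnn]
    have hVc : MeasureTheory.volume ball1 ^ (1 / pp.toReal) = V := by rw [hVdef, hball1, hK'def]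
    rw [hVc]
    have hVV : V = ENNReal.ofReal V.toReal := (ENNReal.ofReal_toReal hVne).symm
    rw [hVV, ← ENNReal.ofReal_mul (le_of_lt hδ0)]
    apply ENNReal.ofReal_le_ofReal
    have hδ2 : δ ≤ (ε/4) / (V.toReal + 1) := min_le_right _ _
    calc δ * V.toReal ≤ ((ε/4) / (V.toReal + 1)) * V.toReal := by
          apply mul_le_mul_of_nonneg_right hδ2 hVt0
      _ ≤ ε/4 := by
          rw [div_mul_eq_mul_div, div_le_iff₀ (by linarith)]
          nlinarith
  have hvolshell : MeasureTheory.volume shell ≤ ENNReal.ofReal β := by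
    rw [hshell]
    have hsub : Metric.closedBall (0 : Fin n₀ → ℝ) R ⊆ Metric.closedBall 0 (R+η) :=
      Metric.closedBall_subset_closedBall (by linarith)
    rw [MeasureTheory.measure_diff hsub Metric.isClosed_closedBall.measurableSet.nullMeasurableSet
      (MeasureTheory.measure_closedBall_lt_top).ne]
    rw [vol_cube n₀ (R+η) (by linarith), vol_cube n₀ R hR0]
    rw [← ENNReal.ofReal_sub _ (by positivity)]
    apply ENNReal.ofReal_le_ofReal
    linarith [hηβ]
  have he2 : MeasureTheory.eLpNorm (shell.indicator (fun _ => A)) pp MeasureTheory.volume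
      ≤ ENNReal.ofReal (ε/4) := by
    rw [MeasureTheory.eLpNorm_indicator_const hmeas_shell hppne0 hppnetop]
    have hnn : ‖A‖ₑ = ENNReal.ofReal A := by
      rw [← Real.enorm_eq_ofReal (le_of_lt hA0)]
    rw [hnn]
    have h1 : MeasureTheory.volume shell ^ (1/pp.toReal) ≤ (ENNReal.ofReal β) ^ (1/pp.toReal) :=
      ENNReal.rpow_le_rpow hvolshell (by positivity)
    have h2 : (ENNReal.ofReal β) ^ (1/pp.toReal) = ENNReal.ofReal (ε/(4*A)) := by
      rw [ENNReal.ofReal_rpow_of_nonneg (le_of_lt hβ0) (by positivity)]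
      congr 1
      rw [hβdef, hpt, ← Real.rpow_mul (by positivity), mul_one_div,
        div_self (by linarith), Real.rpow_one]
    calc (ENNReal.ofReal A) * MeasureTheory.volume shell ^ (1/pp.toReal)
        ≤ (ENNReal.ofReal A) * (ENNReal.ofReal β) ^ (1/pp.toReal) := by
          apply mul_le_mul_right h1
      _ = (ENNReal.ofReal A) * ENNReal.ofReal (ε/(4*A)) := by rw [h2]
      _ = ENNReal.ofReal (A * (ε/(4*A))) := by
          rw [← ENNReal.ofReal_mul (le_of_lt hA0)]
      _ = ENNReal.ofReal (ε/4) := by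
          congr 1
          field_simp
  -- measurability
  have hgmeas : MeasureTheory.AEStronglyMeasurable g MeasureTheory.volume :=
    hgcont.aestronglyMeasurable
  have hhmeas : MeasureTheory.AEStronglyMeasurable h MeasureTheory.volume :=
    hnetcont.aestronglyMeasurable
  have hfmeas : MeasureTheory.AEStronglyMeasurable f MeasureTheory.volume :=
    hf.aestronglyMeasurable
  -- g - h estimate
  have hgh : MeasureTheory.eLpNorm (fun x => g x - h x) pp MeasureTheory.volume
      ≤ ENNReal.ofReal (ε/4) + ENNReal.ofReal (ε/4) := by
    have hmono : MeasureTheory.eLpNorm (fun x => g x - h x) pp MeasureTheory.volume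
        ≤ MeasureTheory.eLpNorm
          (ball1.indicator (fun _ => δ) + shell.indicator (fun _ => A)) pp
          MeasureTheory.volume := by
      apply MeasureTheory.eLpNorm_mono
      intro x
      rw [Real.norm_eq_abs, Real.norm_eq_abs]
      calc |g x - h x| ≤ ball1.indicator (fun _ => δ) x + shell.indicator (fun _ => A) x :=
            hpw x
        _ ≤ |ball1.indicator (fun _ => δ) x + shell.indicator (fun _ => A) x| := le_abs_self _
        _ = |(ball1.indicator (fun _ => δ) + shell.indicator (fun _ => A)) x| := rfl
    refine le_trans hmono (le_trans (MeasureTheory.eLpNorm_add_le ?_ ?_ hpp1) ?_)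
    · exact ((MeasureTheory.stronglyMeasurable_const).indicator hmeas_ball1).aestronglyMeasurable
    · exact ((MeasureTheory.stronglyMeasurable_const).indicator hmeas_shell).aestronglyMeasurable
    · exact add_le_add he1 he2
  -- total
  have htot : MeasureTheory.eLpNorm (fun x => f x - h x) pp MeasureTheory.volume
      ≤ ENNReal.ofReal (ε/4) + (ENNReal.ofReal (ε/4) + ENNReal.ofReal (ε/4)) := by
    have hsplit : (fun x => f x - h x) = (fun x => f x - g x) + (fun x => g x - h x) := by
      funext x
      show f x - h x = (f x - g x) + (g x - h x)
      ring
    rw [hsplit]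
    refine le_trans (MeasureTheory.eLpNorm_add_le ?_ ?_ hpp1) ?_
    · exact hfmeas.sub hgmeas
    · exact hgmeas.sub hhmeas
    · apply add_le_add _ hgh
      have : (fun x => f x - g x) = f - g := rfl
      rw [this]
      exact hgclose
  calc MeasureTheory.eLpNorm (fun x => f x - net x 0) pp MeasureTheory.volume
      = MeasureTheory.eLpNorm (fun x => f x - h x) pp MeasureTheory.volume := rfl
    _ ≤ ENNReal.ofReal (ε/4) + (ENNReal.ofReal (ε/4) + ENNReal.ofReal (ε/4)) := htot
    _ = ENNReal.ofReal (3*ε/4) := by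
        rw [← ENNReal.ofReal_add (by linarith) (by linarith),
          ← ENNReal.ofReal_add (by linarith) (by linarith)]
        congr 1
        ring
    _ < ENNReal.ofReal ε := by
        rw [ENNReal.ofReal_lt_ofReal_iff hε]
        linarith

/-- universal approximation in `L^p(ℝ^{n₀})` for `p ∈ [1,∞)` and in `C(K)`
by ReLU networks of width `2n₀ + 6`. -/
theorem stmt_11 (n₀ : ℕ) (h₀ : 1 ≤ n₀) :
    (∀ p : ℝ, 1 ≤ p → ∀ f : (Fin n₀ → ℝ) → ℝ,
      MemLp f (ENNReal.ofReal p) volume → ∀ ε : ℝ, 0 < ε →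
        ∃ (Lc : ℕ) (g : (Fin n₀ → ℝ) → Fin 1 → ℝ),
          Computes n₀ (List.replicate Lc (2 * n₀ + 6)) 1 g ∧
          eLpNorm (fun x => f x - g x 0) (ENNReal.ofReal p) volume < ENNReal.ofReal ε) ∧
    (∀ K : Set (Fin n₀ → ℝ), IsCompact K → ∀ f : (Fin n₀ → ℝ) → ℝ, ContinuousOn f K →
      ∀ ε : ℝ, 0 < ε →
        ∃ (Lc : ℕ) (g : (Fin n₀ → ℝ) → Fin 1 → ℝ),
          Computes n₀ (List.replicate Lc (2 * n₀ + 6)) 1 g ∧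
          ∀ x ∈ K, |f x - g x 0| < ε) := by
  constructor
  · exact stmt_11_lp n₀
  · exact stmt_11' n₀ h₀
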